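/- arXiv:2010.05186 — 3 statements merged into one kernel-verified Lean document; each statement's English description precedes it below -/
import Mathlib

section
/- Let G be a graph with an even number n of vertices and m edges, and let H be constructed from G by taking two copies A, B of V(G), with edges a_u a_v and b_u b_v for each edge uv of G, plus all edges a_u b_v. If (V₁, V₂) is a bisection of G (|V₁| = |V₂| = n/2) with at most k crossing edges, then H admits a 2-coloring f with at least m - k + n²/4 red edges and at least m - k + n²/4 blue edges. -/
open Finset

attribute [local instance] Classical.propDecidable

set_option maxHeartbeats 800000

/-- The number of edges of `G` whose endpoints are all colored `c` by `f`. -/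
noncomputable def monoEdges {V : Type*} [Fintype V] (G : SimpleGraph V)
    (f : V → Bool) (c : Bool) : ℕ :=
  (G.edgeFinset.filter fun e => ∀ v ∈ e, f v = c).card

/-- The number of edges of `G` with one endpoint in `S` and one endpoint in `T`. -/
noncomputable def crossEdges {V : Type*} [Fintype V] (G : SimpleGraph V)
    (S T : Finset V) : ℕ :=
  (G.edgeFinset.filter fun e => ∃ u ∈ e, u ∈ S ∧ ∃ v ∈ e, v ∈ T).card

/-- The graph `H` built from `G`: two disjoint copies of `G` joined by all edges
between the two copies. -/
def biJoin {V : Type*} (G : SimpleGraph V) : SimpleGraph (V ⊕ V) where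
  Adj x y :=
    match x, y with
    | .inl u, .inl v => G.Adj u v
    | .inr u, .inr v => G.Adj u v
    | .inl _, .inr _ => True
    | .inr _, .inl _ => True
  symm := by
    exact ⟨by rintro (u | u) (v | v) h <;> simp_all <;> exact G.adj_symm h⟩
  loopless := by
    exact ⟨by rintro (u | u) h <;> exact G.irrefl h⟩

open Sum in
lemma monoEdges_biJoin_ge {V : Type*} [Fintype V] (G : SimpleGraph V) (S T : Finset V)
    (f : V ⊕ V → Bool) (c : Bool)
    (hS : ∀ v ∈ S, f (inl v) = c) (hT : ∀ v ∈ T, f (inr v) = c) :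
    (G.edgeFinset.filter fun e => ∀ v ∈ e, v ∈ S).card
      + (G.edgeFinset.filter fun e => ∀ v ∈ e, v ∈ T).card
      + S.card * T.card ≤ monoEdges (biJoin G) f c := by
  classical
  set A₁ := (G.edgeFinset.filter fun e => ∀ v ∈ e, v ∈ S).image (Sym2.map (inl : V → V ⊕ V)) with hA₁
  set A₂ := (G.edgeFinset.filter fun e => ∀ v ∈ e, v ∈ T).image (Sym2.map (inr : V → V ⊕ V)) with hA₂
  set A₃ := (S ×ˢ T).image (fun p => s(inl p.1, inr p.2)) with hA₃
  have memA₁ : ∀ e ∈ A₁, ∀ x ∈ e, ∃ a, x = inl a := by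
    intro e he x hx
    rw [hA₁, Finset.mem_image] at he
    obtain ⟨e₁, _, rfl⟩ := he
    rw [Sym2.mem_map] at hx
    obtain ⟨a, _, rfl⟩ := hx
    exact ⟨a, rfl⟩
  have memA₂ : ∀ e ∈ A₂, ∀ x ∈ e, ∃ a, x = inr a := by
    intro e he x hx
    rw [hA₂, Finset.mem_image] at he
    obtain ⟨e₁, _, rfl⟩ := he
    rw [Sym2.mem_map] at hx
    obtain ⟨a, _, rfl⟩ := hx
    exact ⟨a, rfl⟩
  have memA₃ : ∀ e ∈ A₃, ∃ x ∈ e, ∃ a, x = inr a := by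
    intro e he
    rw [hA₃, Finset.mem_image] at he
    obtain ⟨p, _, rfl⟩ := he
    exact ⟨inr p.2, by simp, p.2, rfl⟩
  have d₁₂ : Disjoint A₁ A₂ := by
    rw [Finset.disjoint_left]
    intro e h1 h2
    induction e using Sym2.ind with
    | _ x y =>
      obtain ⟨a, ha⟩ := memA₁ _ h1 x (by simp)
      obtain ⟨b, hb⟩ := memA₂ _ h2 x (by simp)
      simp [ha] at hb
  have d₁₃ : Disjoint A₁ A₃ := by
    rw [Finset.disjoint_left]
    intro e h1 h3
    obtain ⟨x, hx, a, rfl⟩ := memA₃ _ h3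
    obtain ⟨b, hb⟩ := memA₁ _ h1 _ hx
    simp at hb
  have d₂₃ : Disjoint A₂ A₃ := by
    rw [Finset.disjoint_left]
    intro e h2 h3
    rw [hA₃, Finset.mem_image] at h3
    obtain ⟨p, _, rfl⟩ := h3
    obtain ⟨a, ha⟩ := memA₂ _ h2 (inl p.1) (by simp)
    simp at ha
  have hsub : A₁ ∪ A₂ ∪ A₃ ⊆
      (biJoin G).edgeFinset.filter fun e => ∀ v ∈ e, f v = c := by
    intro e he
    rw [Finset.mem_union, Finset.mem_union] at he
    rcases he with (h | h) | h
    · rw [hA₁, Finset.mem_image] at h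
      obtain ⟨e₁, he₁, rfl⟩ := h
      rw [Finset.mem_filter, SimpleGraph.mem_edgeFinset] at he₁
      induction e₁ using Sym2.ind with
      | _ x y =>
        rw [Finset.mem_filter]
        constructor
        · rw [SimpleGraph.mem_edgeFinset]
          exact he₁.1
        · intro v hv
          rw [Sym2.map_pair_eq, Sym2.mem_iff] at hv
          rcases hv with rfl | rfl
          · exact hS x (he₁.2 x (by simp))
          · exact hS y (he₁.2 y (by simp))
    · rw [hA₂, Finset.mem_image] at h
      obtain ⟨e₁, he₁, rfl⟩ := h
      rw [Finset.mem_filter, SimpleGraph.mem_edgeFinset] at he₁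
      induction e₁ using Sym2.ind with
      | _ x y =>
        rw [Finset.mem_filter]
        constructor
        · rw [SimpleGraph.mem_edgeFinset]
          exact he₁.1
        · intro v hv
          rw [Sym2.map_pair_eq, Sym2.mem_iff] at hv
          rcases hv with rfl | rfl
          · exact hT x (he₁.2 x (by simp))
          · exact hT y (he₁.2 y (by simp))
    · rw [hA₃, Finset.mem_image] at h
      obtain ⟨p, hp, rfl⟩ := h
      rw [Finset.mem_product] at hp
      rw [Finset.mem_filter]
      constructor
      · rw [SimpleGraph.mem_edgeFinset]
        exact trivial
      · intro v hv
        rw [Sym2.mem_iff] at hv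
        rcases hv with rfl | rfl
        · exact hS p.1 hp.1
        · exact hT p.2 hp.2
  have c₁ : A₁.card = (G.edgeFinset.filter fun e => ∀ v ∈ e, v ∈ S).card :=
    Finset.card_image_of_injective _ (Sym2.map.injective inl_injective)
  have c₂ : A₂.card = (G.edgeFinset.filter fun e => ∀ v ∈ e, v ∈ T).card :=
    Finset.card_image_of_injective _ (Sym2.map.injective inr_injective)
  have c₃ : A₃.card = S.card * T.card := by
    rw [hA₃, Finset.card_image_of_injective, Finset.card_product]
    intro p q hpq
    simp only [Sym2.eq_iff] at hpq
    rcases hpq with ⟨h1, h2⟩ | ⟨h1, h2⟩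
    · exact Prod.ext (inl_injective h1) (inr_injective h2)
    · simp at h1
  calc (G.edgeFinset.filter fun e => ∀ v ∈ e, v ∈ S).card
      + (G.edgeFinset.filter fun e => ∀ v ∈ e, v ∈ T).card + S.card * T.card
      = (A₁ ∪ A₂ ∪ A₃).card := by
        rw [Finset.card_union_of_disjoint, Finset.card_union_of_disjoint d₁₂, c₁, c₂, c₃]
        exact Finset.disjoint_union_left.mpr ⟨d₁₃, d₂₃⟩
    _ ≤ (filter (fun e => ∀ v ∈ e, f v = c) (biJoin G).edgeFinset).card :=
        Finset.card_le_card hsub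
    _ = monoEdges (biJoin G) f c := by rw [monoEdges]; convert rfl

lemma edge_split {V : Type*} [Fintype V] (G : SimpleGraph V) (S T : Finset V)
    (hdisj : Disjoint S T) (hunion : S ∪ T = Finset.univ) :
    (G.edgeFinset.filter fun e => ∀ v ∈ e, v ∈ S).card
      + (G.edgeFinset.filter fun e => ∀ v ∈ e, v ∈ T).card
      + crossEdges G S T = G.edgeFinset.card := by
  classical
  rw [crossEdges]
  set p₁ : Sym2 V → Prop := fun e => ∀ v ∈ e, v ∈ S with hp₁
  set p₂ : Sym2 V → Prop := fun e => ∀ v ∈ e, v ∈ T with hp₂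
  set p₃ : Sym2 V → Prop := fun e => ∃ u ∈ e, u ∈ S ∧ ∃ v ∈ e, v ∈ T with hp₃
  have hST : ∀ v : V, v ∈ S ∨ v ∈ T := by
    intro v
    have : v ∈ S ∪ T := hunion ▸ Finset.mem_univ v
    exact Finset.mem_union.mp this
  have hnot : ∀ v : V, v ∈ S → v ∈ T → False := fun v h1 h2 =>
    Finset.disjoint_left.mp hdisj h1 h2
  have key : G.edgeFinset.filter p₁ ∪ G.edgeFinset.filter p₂ ∪ G.edgeFinset.filter p₃
      = G.edgeFinset := by
    apply Finset.Subset.antisymm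
    · intro e he
      rw [Finset.mem_union, Finset.mem_union] at he
      rcases he with (h | h) | h <;> exact (Finset.mem_filter.mp h).1
    · intro e he
      induction e using Sym2.ind with
      | _ x y =>
        rw [Finset.mem_union, Finset.mem_union]
        rcases hST x with hx | hx <;> rcases hST y with hy | hy
        · exact Or.inl (Or.inl (Finset.mem_filter.mpr ⟨he, by
            intro v hv; rw [Sym2.mem_iff] at hv; rcases hv with rfl | rfl <;> assumption⟩))
        · exact Or.inr (Finset.mem_filter.mpr ⟨he,
            ⟨x, by simp, hx, y, by simp, hy⟩⟩)
        · exact Or.inr (Finset.mem_filter.mpr ⟨he,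
            ⟨y, by simp, hy, x, by simp, hx⟩⟩)
        · exact Or.inl (Or.inr (Finset.mem_filter.mpr ⟨he, by
            intro v hv; rw [Sym2.mem_iff] at hv; rcases hv with rfl | rfl <;> assumption⟩))
  have d₁₂ : Disjoint (G.edgeFinset.filter p₁) (G.edgeFinset.filter p₂) := by
    rw [Finset.disjoint_left]
    intro e h1 h2
    induction e using Sym2.ind with
    | _ x y =>
      exact hnot x ((Finset.mem_filter.mp h1).2 x (by simp))
        ((Finset.mem_filter.mp h2).2 x (by simp))
  have d₁₃ : Disjoint (G.edgeFinset.filter p₁) (G.edgeFinset.filter p₃) := by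
    rw [Finset.disjoint_left]
    intro e h1 h3
    obtain ⟨-, u, hu, -, v, hv, hvT⟩ := Finset.mem_filter.mp h3
    exact hnot v ((Finset.mem_filter.mp h1).2 v hv) hvT
  have d₂₃ : Disjoint (G.edgeFinset.filter p₂) (G.edgeFinset.filter p₃) := by
    rw [Finset.disjoint_left]
    intro e h2 h3
    obtain ⟨-, u, hu, huS, -⟩ := Finset.mem_filter.mp h3
    exact hnot u huS ((Finset.mem_filter.mp h2).2 u hu)
  have h := Finset.card_union_of_disjoint (Finset.disjoint_union_left.mpr ⟨d₁₃, d₂₃⟩)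
  rw [Finset.card_union_of_disjoint d₁₂, key] at h
  exact h.symm

theorem bisection_to_load_coloring {V : Type*} [Fintype V] (G : SimpleGraph V)
    (k : ℕ) (hn : Even (Fintype.card V))
    (V₁ V₂ : Finset V) (hdisj : Disjoint V₁ V₂) (hunion : V₁ ∪ V₂ = Finset.univ)
    (h₁ : V₁.card = Fintype.card V / 2) (h₂ : V₂.card = Fintype.card V / 2)
    (hcross : crossEdges G V₁ V₂ ≤ k) :
    ∃ f : V ⊕ V → Bool,
      monoEdges (biJoin G) f true ≥
        G.edgeFinset.card - k + Fintype.card V ^ 2 / 4 ∧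
      monoEdges (biJoin G) f false ≥
        G.edgeFinset.card - k + Fintype.card V ^ 2 / 4 := by
  classical
  obtain ⟨t, ht⟩ := hn
  have hhalf : Fintype.card V / 2 = t := by omega
  have hsq : Fintype.card V ^ 2 / 4 = t * t := by
    rw [ht]
    have : (t + t) ^ 2 = 4 * (t * t) := by ring
    rw [this, Nat.mul_div_cancel_left _ (by norm_num)]
  set f : V ⊕ V → Bool := fun x =>
    match x with
    | .inl v => decide (v ∈ V₁)
    | .inr v => decide (v ∈ V₂) with hf
  refine ⟨f, ?_, ?_⟩
  · have hge := monoEdges_biJoin_ge G V₁ V₂ f true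
      (fun v hv => by simp [hf, hv]) (fun v hv => by simp [hf, hv])
    have hsplit := edge_split G V₁ V₂ hdisj hunion
    rw [h₁, h₂, hhalf] at hge
    omega
  · have hV₂ : ∀ v : V, v ∉ V₁ ↔ v ∈ V₂ := by
      intro v
      constructor
      · intro hv
        have : v ∈ V₁ ∪ V₂ := hunion ▸ Finset.mem_univ v
        rcases Finset.mem_union.mp this with h | h
        · exact absurd h hv
        · exact h
      · intro hv h
        exact Finset.disjoint_left.mp hdisj h hv
    have hge := monoEdges_biJoin_ge G V₂ V₁ f false
      (fun v hv => by simp [hf, (hV₂ v).mpr hv, Finset.disjoint_left.mp hdisj.symm hv])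
      (fun v hv => by simp [hf, fun h => Finset.disjoint_left.mp hdisj hv h])
    have hsplit := edge_split G V₁ V₂ hdisj hunion
    rw [h₁, h₂, hhalf] at hge
    omega
end

section
/- Let G be a graph with m edges and H the bipartite graph obtained by taking a vertex x_v for each v ∈ V(G), a vertex y_e for each e ∈ E(G) adjacent to x_u and x_v when e = uv, and m² pendant vertices z^1_e, ..., z^{m²}_e attached to each y_e. If G has a 2-coloring with at least k₁ red edges and at least k₂ blue edges (k₂ ≥ k₁, and we may assume exactly k₁ red and k₂ blue), then H has a 2-coloring with at least 2k₁ + k₁m² red edges and at least (m + k₂ - k₁) + (m - k₁)m² blue edges. -/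
open Finset

attribute [local instance] Classical.propDecidable

/-- The bipartite reduction graph `H`: a vertex `x_v` for each vertex `v` of `G`
(the `inl` part), a vertex `y_e` for each edge `e` of `G` (the `inr ∘ inl` part)
adjacent to the `x`-vertices of its two endpoints, and `m²` pendant leaves attached
to each `y_e` (the `inr ∘ inr` part), where `m` is the number of edges of `G`. -/
noncomputable def bipRed {V : Type*} [Fintype V] (G : SimpleGraph V) :
    SimpleGraph (V ⊕ (↥G.edgeSet ⊕ ↥G.edgeSet × Fin (G.edgeFinset.card ^ 2))) where
  Adj x y :=
    match x, y with
    | .inl u, .inr (.inl e) => u ∈ (e : Sym2 V)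
    | .inr (.inl e), .inl u => u ∈ (e : Sym2 V)
    | .inr (.inl e), .inr (.inr (e', _)) => e = e'
    | .inr (.inr (e', _)), .inr (.inl e) => e = e'
    | _, _ => False
  symm := by
    constructor
    rintro (u | e | ⟨e, i⟩) (v | e' | ⟨e', j⟩) h <;> simp_all
  loopless := by
    constructor
    rintro (u | e | ⟨e, i⟩) h <;> simp_all

section Aux

variable {V : Type*} [Fintype V] (G : SimpleGraph V)

lemma aux_card_filter (f : V → Bool) (c : Bool) :
    (Finset.univ.filter (fun (e : ↥G.edgeSet) => ∀ v ∈ e.val, f v = c)).card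
      = (G.edgeFinset.filter fun e => ∀ v ∈ e, f v = c).card := by
  apply Finset.card_nbij (fun e => e.val)
  · rintro ⟨e, he⟩ h
    simp only [mem_coe, mem_filter, mem_univ, true_and] at h
    simp only [mem_coe, mem_filter, SimpleGraph.mem_edgeFinset]
    exact ⟨he, h⟩
  · rintro ⟨e, he⟩ _ ⟨e', he'⟩ _ h; simpa using h
  · intro x hx
    simp only [Set.mem_setOf_eq, coe_filter, SimpleGraph.mem_edgeFinset] at hx
    exact ⟨⟨x, hx.1⟩, by simpa using hx.2, rfl⟩

lemma aux_mono_lb {W : Type*} [Fintype W] (H : SimpleGraph W) (g : W → Bool) (c : Bool)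
    {α : Type*} (D : Finset α) (φ : α → Sym2 W)
    (h1 : ∀ a ∈ D, φ a ∈ H.edgeSet ∧ ∀ v ∈ φ a, g v = c)
    (hinj : Set.InjOn φ D) :
    D.card ≤ monoEdges H g c :=
  Finset.card_le_card_of_injOn φ
    (fun a ha => by
      simp only [mem_coe, mem_filter, SimpleGraph.mem_edgeFinset]
      exact h1 a ha) hinj

omit [Fintype V] in
lemma aux_out_mk (e : Sym2 V) : s(e.out.1, e.out.2) = e := by
  rw [Sym2.mk, Prod.mk.eta, e.out_eq]

omit [Fintype V] in
lemma aux_out_ne (e : ↥G.edgeSet) : (e : Sym2 V).out.1 ≠ (e : Sym2 V).out.2 := by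
  intro h
  have hd := G.not_isDiag_of_mem_edgeSet e.2
  rw [← aux_out_mk (e : Sym2 V)] at hd
  exact hd (by rw [Sym2.mk_isDiag_iff]; exact h)

/-- The witnessing coloring on `H`. -/
noncomputable def myg (f : V → Bool) :
    V ⊕ (↥G.edgeSet ⊕ ↥G.edgeSet × Fin (G.edgeFinset.card ^ 2)) → Bool
  | .inl v => f v
  | .inr (.inl e) => if ∀ v ∈ e.val, f v = true then true else false
  | .inr (.inr (e, _)) => if ∀ v ∈ e.val, f v = true then true else false

/-- The injection witnessing the red edge count. -/
noncomputable def φred :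
    ((↥G.edgeSet × Bool) ⊕ (↥G.edgeSet × Fin (G.edgeFinset.card ^ 2))) →
      Sym2 (V ⊕ (↥G.edgeSet ⊕ ↥G.edgeSet × Fin (G.edgeFinset.card ^ 2)))
  | .inl (e, true) => s(.inl e.val.out.1, .inr (.inl e))
  | .inl (e, false) => s(.inl e.val.out.2, .inr (.inl e))
  | .inr (e, i) => s(.inr (.inl e), .inr (.inr (e, i)))

/-- The injection witnessing the blue edge count. -/
noncomputable def φblue (f : V → Bool) :
    (((↥G.edgeSet × Bool) ⊕ ↥G.edgeSet) ⊕ (↥G.edgeSet × Fin (G.edgeFinset.card ^ 2))) →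
      Sym2 (V ⊕ (↥G.edgeSet ⊕ ↥G.edgeSet × Fin (G.edgeFinset.card ^ 2)))
  | .inl (.inl (e, true)) => s(.inl e.val.out.1, .inr (.inl e))
  | .inl (.inl (e, false)) => s(.inl e.val.out.2, .inr (.inl e))
  | .inl (.inr e) =>
      s(.inl (if f e.val.out.1 = false then e.val.out.1 else e.val.out.2), .inr (.inl e))
  | .inr (e, i) => s(.inr (.inl e), .inr (.inr (e, i)))

end Aux

theorem bipartite_reduction_forward {V : Type*} [Fintype V] (G : SimpleGraph V)
    (k₁ k₂ : ℕ) (hk : k₁ ≤ k₂) (f : V → Bool)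
    (hred : monoEdges G f true = k₁) (hblue : monoEdges G f false = k₂) :
    ∃ g : V ⊕ (↥G.edgeSet ⊕ ↥G.edgeSet × Fin (G.edgeFinset.card ^ 2)) → Bool,
      monoEdges (bipRed G) g true ≥
        2 * k₁ + k₁ * G.edgeFinset.card ^ 2 ∧
      monoEdges (bipRed G) g false ≥
        (G.edgeFinset.card + k₂ - k₁) +
          (G.edgeFinset.card - k₁) * G.edgeFinset.card ^ 2 := by
  classical
  set Rf : Finset ↥G.edgeSet :=
    Finset.univ.filter (fun e => ∀ v ∈ e.val, f v = true) with hRf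
  set Bf : Finset ↥G.edgeSet :=
    Finset.univ.filter (fun e => ∀ v ∈ e.val, f v = false) with hBf
  set Nf : Finset ↥G.edgeSet :=
    Finset.univ.filter (fun e => ¬ ∀ v ∈ e.val, f v = true) with hNf
  set Mf : Finset ↥G.edgeSet :=
    Nf.filter (fun e => ¬ ∀ v ∈ e.val, f v = false) with hMf
  have hRcard : Rf.card = k₁ := by rw [hRf, aux_card_filter]; exact hred
  have hBcard : Bf.card = k₂ := by rw [hBf, aux_card_filter]; exact hblue
  have hsplit : Rf.card + Nf.card = G.edgeFinset.card := by
    rw [hRf, hNf, Finset.card_filter_add_card_filter_not]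
    exact G.edgeSet_univ_card
  have hblue_not_red : ∀ e : ↥G.edgeSet,
      (∀ v ∈ e.val, f v = false) → ¬ ∀ v ∈ e.val, f v = true := by
    intro e hb hr
    have h1 := hb _ (Sym2.out_fst_mem e.val)
    have h2 := hr _ (Sym2.out_fst_mem e.val)
    simp [h1] at h2
  have hNsplit : Bf.card + Mf.card = Nf.card := by
    rw [hMf]
    have hBN : Bf = Nf.filter (fun e => ∀ v ∈ e.val, f v = false) := by
      ext e
      simp only [hBf, hNf, mem_filter, mem_univ, true_and]
      exact ⟨fun h => ⟨hblue_not_red e h, h⟩, fun h => h.2⟩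
    rw [hBN, Finset.card_filter_add_card_filter_not]
  have hBMdisj : ∀ e : ↥G.edgeSet, e ∈ Bf → e ∈ Mf → False := by
    intro e hb hm
    rw [hMf, mem_filter] at hm
    rw [hBf, mem_filter] at hb
    exact hm.2 hb.2
  refine ⟨myg G f, ?_, ?_⟩
  · -- red bound
    have hle : ((Rf ×ˢ (univ : Finset Bool)).disjSum
        (Rf ×ˢ (univ : Finset (Fin (G.edgeFinset.card ^ 2))))).card
          ≤ monoEdges (bipRed G) (myg G f) true := by
      apply aux_mono_lb _ _ _ _ (φred G)
      · rintro (⟨e, c⟩ | ⟨e, i⟩) ha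
        · simp only [inl_mem_disjSum, mem_product, hRf, mem_filter, mem_univ, true_and,
            and_true] at ha
          cases c <;> simp only [φred] <;>
            refine ⟨(SimpleGraph.mem_edgeSet (bipRed G)).2 ?_, ?_⟩
          · exact Sym2.out_snd_mem e.val
          · rw [Sym2.ball]
            exact ⟨ha _ (Sym2.out_snd_mem e.val),
              show (if ∀ v ∈ e.val, f v = true then true else false) = true from if_pos ha⟩
          · exact Sym2.out_fst_mem e.val
          · rw [Sym2.ball]
            exact ⟨ha _ (Sym2.out_fst_mem e.val),
              show (if ∀ v ∈ e.val, f v = true then true else false) = true from if_pos ha⟩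
        · simp only [inr_mem_disjSum, mem_product, hRf, mem_filter, mem_univ, true_and,
            and_true] at ha
          refine ⟨(SimpleGraph.mem_edgeSet (bipRed G)).2 rfl, ?_⟩
          simp only [φred]
          rw [Sym2.ball]
          exact ⟨show (if ∀ v ∈ e.val, f v = true then true else false) = true from if_pos ha,
            show (if ∀ v ∈ e.val, f v = true then true else false) = true from if_pos ha⟩
      · rintro (⟨e, (_ | _)⟩ | ⟨e, i⟩) hx (⟨e', (_ | _)⟩ | ⟨e', i'⟩) hy h <;>
          simp only [φred, Sym2.eq_iff, Sum.inl.injEq, Sum.inr.injEq, Prod.mk.injEq,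
            and_false, false_and, and_true, true_and, or_false, false_or,
            reduceCtorEq] at h
        · obtain ⟨-, rfl⟩ := h; rfl
        · obtain ⟨h1, rfl⟩ := h; exact absurd h1 (aux_out_ne G e).symm
        · obtain ⟨h1, rfl⟩ := h; exact absurd h1 (aux_out_ne G e)
        · obtain ⟨-, rfl⟩ := h; rfl
        · obtain ⟨rfl, rfl⟩ : e = e' ∧ i = i' := by tauto
          rfl
    refine le_trans (le_of_eq ?_) hle
    rw [Finset.card_disjSum, Finset.card_product, Finset.card_product, hRcard,
      Finset.card_univ, Finset.card_univ, Fintype.card_bool, Fintype.card_fin]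
    ring
  · -- blue bound
    have hle : (((Bf ×ˢ (univ : Finset Bool)).disjSum Mf).disjSum
        (Nf ×ˢ (univ : Finset (Fin (G.edgeFinset.card ^ 2))))).card
          ≤ monoEdges (bipRed G) (myg G f) false := by
      apply aux_mono_lb _ _ _ _ (φblue G f)
      · rintro ((⟨e, c⟩ | e) | ⟨e, i⟩) ha
        · simp only [inl_mem_disjSum, mem_product, hBf, mem_filter, mem_univ, true_and,
            and_true] at ha
          have hnr := hblue_not_red e ha
          cases c <;> simp only [φblue] <;>
            refine ⟨(SimpleGraph.mem_edgeSet (bipRed G)).2 ?_, ?_⟩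
          · exact Sym2.out_snd_mem e.val
          · rw [Sym2.ball]
            exact ⟨ha _ (Sym2.out_snd_mem e.val),
              show (if ∀ v ∈ e.val, f v = true then true else false) = false from if_neg hnr⟩
          · exact Sym2.out_fst_mem e.val
          · rw [Sym2.ball]
            exact ⟨ha _ (Sym2.out_fst_mem e.val),
              show (if ∀ v ∈ e.val, f v = true then true else false) = false from if_neg hnr⟩
        · simp only [inl_mem_disjSum, inr_mem_disjSum, hMf, hNf, mem_filter, mem_univ,
            true_and] at ha
          obtain ⟨hnr, hnb⟩ := ha
          have hmem : (if f e.val.out.1 = false then e.val.out.1 else e.val.out.2) ∈ e.val := by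
            by_cases h1 : f e.val.out.1 = false
            · simpa [h1] using Sym2.out_fst_mem e.val
            · simpa [h1] using Sym2.out_snd_mem e.val
          have hcol : f (if f e.val.out.1 = false then e.val.out.1 else e.val.out.2) = false := by
            by_cases h1 : f e.val.out.1 = false
            · simpa [h1]
            · rw [if_neg h1]
              push_neg at hnr
              obtain ⟨v, hv, hvne⟩ := hnr
              rw [← aux_out_mk e.val, Sym2.mem_iff] at hv
              rcases hv with rfl | rfl
              · exact absurd (by simpa using hvne) h1
              · simpa using hvne
          refine ⟨(SimpleGraph.mem_edgeSet (bipRed G)).2 hmem, ?_⟩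
          simp only [φblue]
          rw [Sym2.ball]
          exact ⟨hcol,
            show (if ∀ v ∈ e.val, f v = true then true else false) = false from if_neg hnr⟩
        · simp only [inr_mem_disjSum, mem_product, hNf, mem_filter, mem_univ, true_and,
            and_true] at ha
          refine ⟨(SimpleGraph.mem_edgeSet (bipRed G)).2 rfl, ?_⟩
          simp only [φblue]
          rw [Sym2.ball]
          exact ⟨show (if ∀ v ∈ e.val, f v = true then true else false) = false from if_neg ha,
            show (if ∀ v ∈ e.val, f v = true then true else false) = false from if_neg ha⟩
      · rintro ((⟨e, (_ | _)⟩ | e) | ⟨e, i⟩) hx ((⟨e', (_ | _)⟩ | e') | ⟨e', i'⟩) hy h <;>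
          simp only [φblue, Sym2.eq_iff, Sum.inl.injEq, Sum.inr.injEq, Prod.mk.injEq,
            and_false, false_and, and_true, true_and, or_false, false_or,
            reduceCtorEq] at h
        · obtain ⟨-, rfl⟩ := h; rfl
        · obtain ⟨h1, rfl⟩ := h; exact absurd h1 (aux_out_ne G e).symm
        · obtain ⟨h1, rfl⟩ := h
          exact (hBMdisj e (by simpa using hx) (by simpa using hy)).elim
        · obtain ⟨h1, rfl⟩ := h; exact absurd h1 (aux_out_ne G e)
        · obtain ⟨-, rfl⟩ := h; rfl
        · obtain ⟨h1, rfl⟩ := h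
          exact (hBMdisj e (by simpa using hx) (by simpa using hy)).elim
        · obtain ⟨h1, rfl⟩ := h
          exact (hBMdisj e (by simpa using hy) (by simpa using hx)).elim
        · obtain ⟨h1, rfl⟩ := h
          exact (hBMdisj e (by simpa using hy) (by simpa using hx)).elim
        · obtain ⟨-, rfl⟩ := h; rfl
        · obtain ⟨rfl, rfl⟩ : e = e' ∧ i = i' := by tauto
          rfl
    refine le_trans ?_ hle
    rw [Finset.card_disjSum, Finset.card_disjSum, Finset.card_product, Finset.card_product,
      hBcard, Finset.card_univ, Finset.card_univ, Fintype.card_bool, Fintype.card_fin]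
    have h1 : G.edgeFinset.card + k₂ - k₁ ≤ k₂ * 2 + Mf.card := by omega
    have h2 : (G.edgeFinset.card - k₁) * G.edgeFinset.card ^ 2
        ≤ Nf.card * G.edgeFinset.card ^ 2 :=
      Nat.mul_le_mul_right _ (by omega)
    omega
end

section
/- Let G be a graph with m edges and H the bipartite graph with vertices x_v (v ∈ V(G)), y_e (e ∈ E(G)) adjacent to the two x-vertices of its endpoints, and m² leaves attached to each y_e. If H has a 2-coloring g with at least 2k₁ + k₁m² red edges and at least (m + k₂ - k₁) + (m - k₁)m² blue edges, where k₁ + k₂ ≤ m and k₂ ≥ k₁, then G has a 2-coloring with at least k₁ red edges and at least k₂ blue edges. -/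
open Finset

attribute [local instance] Classical.propDecidable

lemma bipRed_adj_cases {V : Type*} [Fintype V] (G : SimpleGraph V)
    {x y : V ⊕ (↥G.edgeSet ⊕ ↥G.edgeSet × Fin (G.edgeFinset.card ^ 2))}
    (h : (bipRed G).Adj x y) :
    (∃ (u : V) (e : ↥G.edgeSet), u ∈ (e : Sym2 V) ∧
      ((x = .inl u ∧ y = .inr (.inl e)) ∨ (x = .inr (.inl e) ∧ y = .inl u))) ∨
    (∃ (e : ↥G.edgeSet) (i : Fin (G.edgeFinset.card ^ 2)),
      (x = .inr (.inl e) ∧ y = .inr (.inr (e, i))) ∨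
      (x = .inr (.inr (e, i)) ∧ y = .inr (.inl e))) := by
  rcases x with u | e | ⟨e, i⟩ <;> rcases y with v | e' | ⟨e', j⟩
  · exact absurd h (by simp [bipRed])
  · exact Or.inl ⟨u, e', h, Or.inl ⟨rfl, rfl⟩⟩
  · exact absurd h (by simp [bipRed])
  · exact Or.inl ⟨v, e, h, Or.inr ⟨rfl, rfl⟩⟩
  · exact absurd h (by simp [bipRed])
  · have h' : e = e' := h
    subst h'
    exact Or.inr ⟨e, j, Or.inl ⟨rfl, rfl⟩⟩
  · exact absurd h (by simp [bipRed])
  · obtain rfl : e' = e := h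
    exact Or.inr ⟨e', i, Or.inr ⟨rfl, rfl⟩⟩
  · exact absurd h (by simp [bipRed])

set_option maxHeartbeats 1000000 in
lemma bipRed_key {V : Type*} [Fintype V] (G : SimpleGraph V)
    (hne : Nonempty ↥G.edgeSet)
    (g : V ⊕ (↥G.edgeSet ⊕ ↥G.edgeSet × Fin (G.edgeFinset.card ^ 2)) → Bool) (c : Bool) :
    monoEdges (bipRed G) g c ≤
      (G.edgeFinset.card ^ 2 + 1) *
        (univ.filter fun e : ↥G.edgeSet => g (.inr (.inl e)) = c).card +
      (univ.filter fun e : ↥G.edgeSet =>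
        g (.inr (.inl e)) = c ∧ ∀ v ∈ (e : Sym2 V), g (.inl v) = c).card := by
  classical
  let φ : Sym2 (V ⊕ (↥G.edgeSet ⊕ ↥G.edgeSet × Fin (G.edgeFinset.card ^ 2))) → ↥G.edgeSet :=
    fun s => if h : ∃ e : ↥G.edgeSet, Sum.inr (Sum.inl e) ∈ s then h.choose else hne.some
  have hφ : ∀ (e : ↥G.edgeSet) s, Sum.inr (Sum.inl e) ∈ s →
      (∀ e', Sum.inr (Sum.inl e') ∈ s → e' = e) → φ s = e := by
    intro e s h1 h2
    have hex : ∃ e' : ↥G.edgeSet, Sum.inr (Sum.inl e') ∈ s := ⟨e, h1⟩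
    simp only [φ, dif_pos hex]
    exact h2 _ hex.choose_spec
  have hbound : ∀ (e : ↥G.edgeSet)
      (F : Finset (Sym2 (V ⊕ (↥G.edgeSet ⊕ ↥G.edgeSet × Fin (G.edgeFinset.card ^ 2))))),
      (∀ s ∈ F, s ∈ (bipRed G).edgeSet ∧ (∀ v ∈ s, g v = c) ∧ φ s = e) →
      F.card ≤
        (if g (Sum.inr (Sum.inl e)) = c then
          (if ∀ v ∈ (e : Sym2 V), g (Sum.inl v) = c then 2 else 1) + G.edgeFinset.card ^ 2
         else 0) := by
    intro e F hF
    obtain ⟨u, v, huv⟩ : ∃ u v, (e : Sym2 V) = s(u, v) :=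
      Sym2.ind (f := fun z => ∃ u v, z = s(u, v)) (fun u v => ⟨u, v, rfl⟩) (e : Sym2 V)
    set D : Finset (V ⊕ (↥G.edgeSet ⊕ ↥G.edgeSet × Fin (G.edgeFinset.card ^ 2))) :=
      (({u, v} : Finset V).filter fun w => g (Sum.inl w) = c).image Sum.inl ∪
        (univ.image fun i : Fin (G.edgeFinset.card ^ 2) => Sum.inr (Sum.inr (e, i))) with hD
    have hmem : ∀ s ∈ F,
        g (Sum.inr (Sum.inl e)) = c ∧ s ∈ D.image fun z => s(Sum.inr (Sum.inl e), z) := by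
      intro s hs
      obtain ⟨hsE, hP, hφs⟩ := hF s hs
      clear hs
      revert hsE hP hφs
      induction s using Sym2.ind with
      | _ x y =>
        intro hsE hP hφs
        have hadj := ((bipRed G).mem_edgeSet).mp hsE
        have hgx : g x = c := hP x (Sym2.mem_mk_left x y)
        have hgy : g y = c := hP y (Sym2.mem_mk_right x y)
        rcases bipRed_adj_cases G hadj with
          ⟨w, e', hw, ⟨rfl, rfl⟩ | ⟨rfl, rfl⟩⟩ | ⟨e', i, ⟨rfl, rfl⟩ | ⟨rfl, rfl⟩⟩
        · have he : e' = e := by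
            rw [← hφs]
            refine (hφ e' _ (Sym2.mem_mk_right _ _) ?_).symm
            intro e'' he''
            rcases Sym2.mem_iff.mp he'' with h | h
            · simp at h
            · simpa using h
          subst he
          refine ⟨hgy, Finset.mem_image.mpr ⟨Sum.inl w, ?_, Sym2.eq_swap⟩⟩
          rw [hD]
          refine Finset.mem_union_left _ (Finset.mem_image.mpr ⟨w, ?_, rfl⟩)
          rw [Finset.mem_filter]
          refine ⟨?_, hgx⟩
          rw [huv] at hw
          rcases Sym2.mem_iff.mp hw with rfl | rfl <;> simp
        · have he : e' = e := by
            rw [← hφs]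
            refine (hφ e' _ (Sym2.mem_mk_left _ _) ?_).symm
            intro e'' he''
            rcases Sym2.mem_iff.mp he'' with h | h
            · simpa using h
            · simp at h
          subst he
          refine ⟨hgx, Finset.mem_image.mpr ⟨Sum.inl w, ?_, rfl⟩⟩
          rw [hD]
          refine Finset.mem_union_left _ (Finset.mem_image.mpr ⟨w, ?_, rfl⟩)
          rw [Finset.mem_filter]
          refine ⟨?_, hgy⟩
          rw [huv] at hw
          rcases Sym2.mem_iff.mp hw with rfl | rfl <;> simp
        · have he : e' = e := by
            rw [← hφs]
            refine (hφ e' _ (Sym2.mem_mk_left _ _) ?_).symm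
            intro e'' he''
            rcases Sym2.mem_iff.mp he'' with h | h
            · simpa using h
            · simp at h
          subst he
          refine ⟨hgx, Finset.mem_image.mpr ⟨Sum.inr (Sum.inr (e', i)), ?_, rfl⟩⟩
          rw [hD]
          exact Finset.mem_union_right _ (Finset.mem_image.mpr ⟨i, mem_univ _, rfl⟩)
        · have he : e' = e := by
            rw [← hφs]
            refine (hφ e' _ (Sym2.mem_mk_right _ _) ?_).symm
            intro e'' he''
            rcases Sym2.mem_iff.mp he'' with h | h
            · simp at h
            · simpa using h
          subst he
          refine ⟨hgy, Finset.mem_image.mpr ⟨Sum.inr (Sum.inr (e', i)), ?_, Sym2.eq_swap⟩⟩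
          rw [hD]
          exact Finset.mem_union_right _ (Finset.mem_image.mpr ⟨i, mem_univ _, rfl⟩)
    by_cases hpc : g (Sum.inr (Sum.inl e)) = c
    · rw [if_pos hpc]
      have h1 : ((({u, v} : Finset V).filter fun w => g (Sum.inl w) = c).image
          (Sum.inl : V → V ⊕ (↥G.edgeSet ⊕ ↥G.edgeSet × Fin (G.edgeFinset.card ^ 2)))).card ≤
          (if ∀ w ∈ (e : Sym2 V), g (Sum.inl w) = c then 2 else 1) := by
        refine le_trans Finset.card_image_le ?_
        by_cases hq : ∀ w ∈ (e : Sym2 V), g (Sum.inl w) = c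
        · rw [if_pos hq]
          refine le_trans (Finset.card_filter_le _ _) ?_
          refine le_trans (Finset.card_insert_le _ _) ?_
          simp
        · rw [if_neg hq]
          rw [huv] at hq
          push_neg at hq
          obtain ⟨w, hwmem, hwc⟩ := hq
          rcases Sym2.mem_iff.mp hwmem with rfl | rfl
          · refine le_trans (Finset.card_le_card (fun z hz => ?_)) (Finset.card_singleton v).le
            rw [Finset.mem_filter, Finset.mem_insert, Finset.mem_singleton] at hz
            rw [Finset.mem_singleton]
            rcases hz with ⟨rfl | rfl, hc⟩
            · exact absurd hc hwc
            · rfl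
          · refine le_trans (Finset.card_le_card (fun z hz => ?_)) (Finset.card_singleton u).le
            rw [Finset.mem_filter, Finset.mem_insert, Finset.mem_singleton] at hz
            rw [Finset.mem_singleton]
            rcases hz with ⟨rfl | rfl, hc⟩
            · rfl
            · exact absurd hc hwc
      refine le_trans (Finset.card_le_card fun s hs => (hmem s hs).2) ?_
      refine le_trans Finset.card_image_le ?_
      rw [hD]
      refine le_trans (Finset.card_union_le _ _) ?_
      refine Nat.add_le_add h1 ?_
      refine le_trans Finset.card_image_le ?_
      simp
    · rw [if_neg hpc]
      have hF0 : F.card = 0 := by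
        rw [Finset.card_eq_zero]
        exact Finset.eq_empty_of_forall_notMem fun s hs => hpc (hmem s hs).1
      omega
  rw [monoEdges, Finset.card_eq_sum_card_fiberwise (f := φ) (t := univ) (fun x _ => mem_univ _)]
  refine le_trans (Finset.sum_le_sum fun e _ => hbound e _ (fun s hs => ?_)) ?_
  · simp only [Finset.mem_filter, SimpleGraph.mem_edgeFinset] at hs
    exact ⟨hs.1.1, hs.1.2, hs.2⟩
  have hpt : ∀ e : ↥G.edgeSet,
      (if g (Sum.inr (Sum.inl e)) = c then
        (if ∀ v ∈ (e : Sym2 V), g (Sum.inl v) = c then 2 else 1) + G.edgeFinset.card ^ 2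
       else 0) =
      (G.edgeFinset.card ^ 2 + 1) * (if g (Sum.inr (Sum.inl e)) = c then 1 else 0) +
      (if g (Sum.inr (Sum.inl e)) = c ∧ ∀ v ∈ (e : Sym2 V), g (Sum.inl v) = c then 1 else 0) := by
    intro e
    rcases Classical.em (g (Sum.inr (Sum.inl e)) = c) with h1 | h1
    · rcases Classical.em (∀ v ∈ (e : Sym2 V), g (Sum.inl v) = c) with h2 | h2
      · rw [if_pos h1, if_pos h2, if_pos h1, if_pos (show _ ∧ _ from ⟨h1, h2⟩)]
        ring
      · rw [if_pos h1, if_neg h2, if_pos h1,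
          if_neg (show ¬(_ ∧ _) from fun h => h2 h.2)]
        ring
    · rw [if_neg h1, if_neg h1, if_neg (show ¬(_ ∧ _) from fun h => h1 h.1)]
      ring
  rw [Finset.sum_congr rfl fun e _ => hpt e, Finset.sum_add_distrib, ← Finset.mul_sum]
  simp [Finset.sum_boole, Finset.filter_congr_decidable]

lemma bipRed_arith (m M t t' a b k₁ k₂ d : ℕ) (_hm1 : 1 ≤ m) (hMm : m ≤ M)
    (hk : k₁ ≤ k₂) (hd : m = k₁ + d) (hk2d : k₂ ≤ d)
    (htt' : t + t' = m) (hta : a ≤ t) (htb : b ≤ t')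
    (h1 : 2 * k₁ + k₁ * M ≤ (M + 1) * t + a)
    (h2 : (k₂ + d) + d * M ≤ (M + 1) * t' + b) : k₁ ≤ a ∧ k₂ ≤ b := by
  have hdm : d ≤ m := by omega
  have hk1t : k₁ ≤ t := by
    by_contra h
    push_neg at h
    have h3 : (M + 2) * k₁ ≤ (M + 2) * t := by nlinarith
    have := Nat.le_of_mul_le_mul_left h3 (by omega)
    omega
  have htk1 : t ≤ k₁ := by
    by_contra h
    push_neg at h
    have hd1 : t' + 1 ≤ d := by omega
    have h4 : (M + 2) * (t' + 1) ≤ (M + 2) * d := Nat.mul_le_mul_left _ hd1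
    nlinarith
  obtain rfl : t = k₁ := le_antisymm htk1 hk1t
  obtain rfl : t' = d := by omega
  constructor <;> nlinarith

theorem bipartite_reduction_reverse {V : Type*} [Fintype V] (G : SimpleGraph V)
    (k₁ k₂ : ℕ) (hk : k₁ ≤ k₂) (hkm : k₁ + k₂ ≤ G.edgeFinset.card)
    (g : V ⊕ (↥G.edgeSet ⊕ ↥G.edgeSet × Fin (G.edgeFinset.card ^ 2)) → Bool)
    (hred : monoEdges (bipRed G) g true ≥
      2 * k₁ + k₁ * G.edgeFinset.card ^ 2)
    (hblue : monoEdges (bipRed G) g false ≥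
      (G.edgeFinset.card + k₂ - k₁) +
        (G.edgeFinset.card - k₁) * G.edgeFinset.card ^ 2) :
    ∃ f : V → Bool,
      monoEdges G f true ≥ k₁ ∧ monoEdges G f false ≥ k₂ := by
  classical
  by_cases hm0 : G.edgeFinset.card = 0
  · exact ⟨fun _ => true, by omega, by omega⟩
  have hm1 : 1 ≤ G.edgeFinset.card := by omega
  have hne : Nonempty ↥G.edgeSet := by
    rw [← Fintype.card_pos_iff, ← SimpleGraph.edgeFinset_card]
    omega
  have h1 := le_trans hred (bipRed_key G hne g true)
  have h2 := le_trans hblue (bipRed_key G hne g false)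
  have hta : (univ.filter fun e : ↥G.edgeSet =>
      g (.inr (.inl e)) = true ∧ ∀ v ∈ (e : Sym2 V), g (.inl v) = true).card ≤
      (univ.filter fun e : ↥G.edgeSet => g (.inr (.inl e)) = true).card :=
    Finset.card_le_card (Finset.monotone_filter_right _ fun e _ => And.left)
  have htb : (univ.filter fun e : ↥G.edgeSet =>
      g (.inr (.inl e)) = false ∧ ∀ v ∈ (e : Sym2 V), g (.inl v) = false).card ≤
      (univ.filter fun e : ↥G.edgeSet => g (.inr (.inl e)) = false).card :=
    Finset.card_le_card (Finset.monotone_filter_right _ fun e _ => And.left)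
  have htt' : (univ.filter fun e : ↥G.edgeSet => g (.inr (.inl e)) = true).card +
      (univ.filter fun e : ↥G.edgeSet => g (.inr (.inl e)) = false).card
      = G.edgeFinset.card := by
    conv_rhs => rw [SimpleGraph.edgeFinset_card, ← Finset.card_univ]
    rw [← Finset.card_filter_add_card_filter_not (s := (univ : Finset ↥G.edgeSet))
        (p := fun e : ↥G.edgeSet => g (.inr (.inl e)) = true)]
    congr 1
    exact congrArg Finset.card (Finset.filter_congr fun e _ => by simp)
  have hmono : ∀ c : Bool, (univ.filter fun e : ↥G.edgeSet =>
      g (.inr (.inl e)) = c ∧ ∀ v ∈ (e : Sym2 V), g (.inl v) = c).card ≤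
      monoEdges G (fun v => g (.inl v)) c := by
    intro c
    rw [monoEdges]
    refine Finset.card_le_card_of_injOn (fun e => (e : Sym2 V)) ?_ ?_
    · intro e he
      simp only [Finset.mem_coe, Finset.mem_filter] at he ⊢
      exact ⟨SimpleGraph.mem_edgeFinset.mpr e.2, he.2.2⟩
    · intro e _ e' _ h
      exact Subtype.ext h
  obtain ⟨d, hd⟩ : ∃ d, G.edgeFinset.card = k₁ + d := ⟨G.edgeFinset.card - k₁, by omega⟩
  have e1 : G.edgeFinset.card + k₂ - k₁ = k₂ + d := by omega
  have e2 : G.edgeFinset.card - k₁ = d := by omega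
  rw [e1, e2] at h2
  have hMm : G.edgeFinset.card ≤ G.edgeFinset.card ^ 2 := Nat.le_self_pow two_ne_zero _
  obtain ⟨hA, hB⟩ := bipRed_arith (G.edgeFinset.card) (G.edgeFinset.card ^ 2) _ _ _ _ k₁ k₂ d
    hm1 hMm hk hd (by omega) htt' hta htb h1 h2
  exact ⟨fun v => g (.inl v), le_trans hA (hmono true), le_trans hB (hmono false)⟩
end
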